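/- Let Π and Y be symmetric positive definite m×m real matrices. Let μ be the measure on ℝᵐ with density y ↦ ((2π)^m · det Π)^{−1/2} · exp(−½ yᵀΠ⁻¹y) with respect to Lebesgue measure (the N(0, Π) Gaussian measure), and let ν be the uniform probability measure on the interval [0,1]. Then under the product measure μ × ν, the probability of the event {(y, ζ) : ζ > exp(−½ yᵀYy)} equals 1 − (det(I + Π Y))^{−1/2}. -/

import Mathlib

open Matrix MeasureTheory

lemma quad_continuous {m : ℕ} (A : Matrix (Fin m) (Fin m) ℝ) :
    Continuous fun y : Fin m → ℝ => y ⬝ᵥ (A *ᵥ y) := by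
  simp only [dotProduct, mulVec]
  exact continuous_finset_sum _ fun i _ => (continuous_apply i).mul
    (continuous_finset_sum _ fun j _ => continuous_const.mul (continuous_apply j))

lemma std_integrable {m : ℕ} :
    Integrable (fun x : Fin m → ℝ => Real.exp (-(1/2) * (x ⬝ᵥ x))) := by
  have h : ∀ x : Fin m → ℝ, Real.exp (-(1/2) * (x ⬝ᵥ x))
      = ∏ i, Real.exp (-(1/2 : ℝ) * (x i) ^ 2) := by
    intro x
    rw [← Real.exp_sum]
    congr 1
    simp [dotProduct, Finset.mul_sum, pow_two, mul_assoc]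
  simp_rw [h]
  exact Integrable.fintype_prod (f := fun _ t => Real.exp (-(1/2 : ℝ) * t ^ 2))
    (fun i => integrable_exp_neg_mul_sq (by norm_num))

lemma std_integral {m : ℕ} :
    ∫ x : Fin m → ℝ, Real.exp (-(1/2) * (x ⬝ᵥ x)) = Real.sqrt ((2 * Real.pi) ^ m) := by
  have h : ∀ x : Fin m → ℝ, Real.exp (-(1/2) * (x ⬝ᵥ x))
      = ∏ i, Real.exp (-(1/2 : ℝ) * (x i) ^ 2) := by
    intro x
    rw [← Real.exp_sum]
    congr 1
    simp [dotProduct, Finset.mul_sum, pow_two, mul_assoc]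
  simp_rw [h]
  rw [MeasureTheory.volume_pi, MeasureTheory.integral_fintype_prod_eq_pow (ι := Fin m) (fun t => Real.exp (-(1/2 : ℝ) * t ^ 2))]
  rw [integral_gaussian]
  rw [Fintype.card_fin]
  have : Real.pi / (1/2) = 2 * Real.pi := by ring
  rw [this]
  have key : ∀ n : ℕ, Real.sqrt (2 * Real.pi) ^ n = Real.sqrt ((2 * Real.pi) ^ n) := by
    intro n
    induction n with
    | zero => simp
    | succ k ih => rw [pow_succ, pow_succ, ih, ← Real.sqrt_mul (by positivity)]
  exact key m

open scoped MatrixOrder in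
lemma gauss {m : ℕ} (A : Matrix (Fin m) (Fin m) ℝ) (hA : A.PosDef) :
    Integrable (fun y : Fin m → ℝ => Real.exp (-(1/2) * (y ⬝ᵥ (A *ᵥ y)))) ∧
    ∫ y : Fin m → ℝ, Real.exp (-(1/2) * (y ⬝ᵥ (A *ᵥ y)))
      = Real.sqrt ((2 * Real.pi) ^ m) / Real.sqrt A.det := by
  classical
  set B := CFC.sqrt A with hBdef
  have hBB : B * B = A := CFC.sqrt_mul_sqrt_self A hA.posSemidef.nonneg
  have hBsym : Bᵀ = B := by
    have := (CFC.sqrt_nonneg A).posSemidef.isHermitian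
    simpa [Matrix.IsHermitian, Matrix.conjTranspose_eq_transpose_of_trivial] using this
  have hdetA : 0 < A.det := hA.det_pos
  have hdetBsq : B.det * B.det = A.det := by rw [← Matrix.det_mul, hBB]
  have hdetBnn : 0 ≤ B.det := by
    have hs := (CFC.sqrt_nonneg A).posSemidef
    rw [hs.isHermitian.det_eq_prod_eigenvalues]
    exact Finset.prod_nonneg fun i _ => hs.eigenvalues_nonneg i
  have hdetB : B.det = Real.sqrt A.det := by
    rw [← hdetBsq, Real.sqrt_mul_self hdetBnn]
  have hdetBne : B.det ≠ 0 := by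
    intro h; rw [← hdetBsq, h, mul_zero] at hdetA; exact lt_irrefl _ hdetA
  -- quadratic form identity
  have hquad : ∀ y : Fin m → ℝ, y ⬝ᵥ (A *ᵥ y) = (B *ᵥ y) ⬝ᵥ (B *ᵥ y) := by
    intro y
    rw [← hBB, ← Matrix.mulVec_mulVec, Matrix.dotProduct_mulVec, ← Matrix.mulVec_transpose, hBsym]
  -- change of variables
  set T : (Fin m → ℝ) →ₗ[ℝ] (Fin m → ℝ) := Matrix.toLin' B with hTdef
  have hTdet : LinearMap.det T = B.det := LinearMap.det_toLin' B
  have hmap : Measure.map T volume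
      = ENNReal.ofReal |B.det|⁻¹ • (volume : Measure (Fin m → ℝ)) := by
    have h0 := Real.map_linearMap_volume_pi_eq_smul_volume_pi (f := T)
      (by rw [hTdet]; exact hdetBne)
    rwa [abs_inv, hTdet] at h0
  have hTcont : Continuous T := LinearMap.continuous_on_pi T
  have hTmeas : AEMeasurable T (volume : Measure (Fin m → ℝ)) :=
    hTcont.measurable.aemeasurable
  have hstdcont : Continuous (fun x : Fin m → ℝ => Real.exp (-(1/2) * (x ⬝ᵥ x))) := by
    have : Continuous fun x : Fin m → ℝ => x ⬝ᵥ x := by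
      simp only [dotProduct]
      exact continuous_finset_sum _ fun i _ => (continuous_apply i).mul (continuous_apply i)
    exact Real.continuous_exp.comp (continuous_const.mul this)
  have hcomp : ∀ y : Fin m → ℝ, Real.exp (-(1/2) * (y ⬝ᵥ (A *ᵥ y)))
      = (fun x : Fin m → ℝ => Real.exp (-(1/2) * (x ⬝ᵥ x))) (T y) := by
    intro y
    simp only [hquad y, hTdef, Matrix.toLin'_apply]
  have hconst : (ENNReal.ofReal |B.det|⁻¹) ≠ ⊤ := ENNReal.ofReal_ne_top
  have hint_smul : Integrable (fun x : Fin m → ℝ => Real.exp (-(1/2) * (x ⬝ᵥ x)))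
      (Measure.map T volume) := by
    rw [hmap]
    exact std_integrable.smul_measure hconst
  have hint : Integrable (fun y : Fin m → ℝ => Real.exp (-(1/2) * (y ⬝ᵥ (A *ᵥ y)))) := by
    have := (integrable_map_measure hint_smul.aestronglyMeasurable hTmeas).mp hint_smul
    refine this.congr (Filter.Eventually.of_forall fun y => ?_)
    exact (hcomp y).symm
  refine ⟨hint, ?_⟩
  calc ∫ y : Fin m → ℝ, Real.exp (-(1/2) * (y ⬝ᵥ (A *ᵥ y)))
      = ∫ y : Fin m → ℝ, (fun x : Fin m → ℝ => Real.exp (-(1/2) * (x ⬝ᵥ x))) (T y) := by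
        simp_rw [hcomp]
    _ = ∫ x, Real.exp (-(1/2) * (x ⬝ᵥ x)) ∂(Measure.map T volume) :=
        (integral_map hTmeas hint_smul.aestronglyMeasurable).symm
    _ = |B.det|⁻¹ • ∫ x : Fin m → ℝ, Real.exp (-(1/2) * (x ⬝ᵥ x)) := by
        rw [hmap, integral_smul_measure, ENNReal.toReal_ofReal (by positivity)]
    _ = Real.sqrt ((2 * Real.pi) ^ m) / Real.sqrt A.det := by
        rw [std_integral, abs_of_nonneg hdetBnn, hdetB, smul_eq_mul, inv_mul_eq_div]

lemma rpow_neg_half_eq (x : ℝ) (hx : 0 ≤ x) : x ^ (-(1:ℝ)/2) = (Real.sqrt x)⁻¹ := by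
  rw [neg_div, Real.rpow_neg hx, Real.sqrt_eq_rpow]


/-- Communication rate of the open-loop stochastic event-triggered schedule:
if `μ` is the `N(0, Π)` Gaussian measure on `ℝᵐ` (density
`((2π)^m det Π)^{−1/2} exp(−½ yᵀΠ⁻¹y)` w.r.t. Lebesgue) and `ν` is the uniform
probability measure on `[0,1]`, then the `μ × ν`-probability of
`{(y, ζ) : ζ > exp(−½ yᵀYy)}` equals `1 − (det(I + Π Y))^{−1/2}`. -/
theorem stmt_3 {m : ℕ} (Pmat Y : Matrix (Fin m) (Fin m) ℝ)
    (hP : Pmat.PosDef) (hY : Y.PosDef)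
    (μ : Measure (Fin m → ℝ)) (ν : Measure ℝ)
    (hμ : μ = (volume : Measure (Fin m → ℝ)).withDensity (fun y =>
        ENNReal.ofReal
          (((2 * Real.pi) ^ m * Pmat.det) ^ (-(1 : ℝ) / 2) *
            Real.exp (-(1 / 2) * (y ⬝ᵥ (Pmat⁻¹ *ᵥ y))))))
    (hν : ν = (volume : Measure ℝ).restrict (Set.Icc (0 : ℝ) 1)) :
    μ.prod ν {p : (Fin m → ℝ) × ℝ | Real.exp (-(1 / 2) * (p.1 ⬝ᵥ (Y *ᵥ p.1))) < p.2} =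
      ENNReal.ofReal (1 - ((1 + Pmat * Y).det) ^ (-(1 : ℝ) / 2)) := by
  subst hμ hν
  set c : ℝ := ((2 * Real.pi) ^ m * Pmat.det) ^ (-(1 : ℝ)/2) with hcdef
  set f : (Fin m → ℝ) → ℝ := fun y => Real.exp (-(1/2) * (y ⬝ᵥ (Y *ᵥ y))) with hfdef
  have hfcont : Continuous f :=
    Real.continuous_exp.comp (continuous_const.mul (quad_continuous Y))
  have hfpos : ∀ y, 0 < f y := fun y => Real.exp_pos _
  have hfle : ∀ y, f y ≤ 1 := by
    intro y
    rw [hfdef]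
    apply Real.exp_le_one_iff.mpr
    have h0 : 0 ≤ y ⬝ᵥ (Y *ᵥ y) := by simpa using hY.posSemidef.dotProduct_mulVec_nonneg y
    nlinarith
  have hS : MeasurableSet {p : (Fin m → ℝ) × ℝ | f p.1 < p.2} :=
    measurableSet_lt (hfcont.comp continuous_fst).measurable measurable_snd
  rw [Measure.prod_apply hS]
  -- inner measure
  have hinner : ∀ y : Fin m → ℝ,
      (volume.restrict (Set.Icc (0:ℝ) 1)) (Prod.mk y ⁻¹' {p : (Fin m → ℝ) × ℝ | f p.1 < p.2})
        = ENNReal.ofReal (1 - f y) := by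
    intro y
    have hpre : (Prod.mk y ⁻¹' {p : (Fin m → ℝ) × ℝ | f p.1 < p.2}) = Set.Ioi (f y) := rfl
    rw [hpre, Measure.restrict_apply measurableSet_Ioi]
    have : Set.Ioi (f y) ∩ Set.Icc (0:ℝ) 1 = Set.Ioc (f y) 1 := by
      ext x
      simp only [Set.mem_inter_iff, Set.mem_Ioi, Set.mem_Icc, Set.mem_Ioc]
      exact ⟨fun ⟨h1, _, h3⟩ => ⟨h1, h3⟩,
        fun ⟨h1, h2⟩ => ⟨h1, le_trans (hfpos y).le h1.le, h2⟩⟩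
    rw [this, Real.volume_Ioc]
  simp_rw [hinner]
  -- withDensity
  have hdens : Measurable (fun y : Fin m → ℝ =>
      ENNReal.ofReal (c * Real.exp (-(1/2) * (y ⬝ᵥ (Pmat⁻¹ *ᵥ y))))) := by
    exact (continuous_const.mul (Real.continuous_exp.comp
      (continuous_const.mul (quad_continuous Pmat⁻¹)))).measurable.ennreal_ofReal
  have hmeas2 : Measurable (fun y : Fin m → ℝ => ENNReal.ofReal (1 - f y)) :=
    (continuous_const.sub hfcont).measurable.ennreal_ofReal
  rw [lintegral_withDensity_eq_lintegral_mul _ hdens hmeas2]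
  -- pointwise rewrite to a single ofReal
  set G : (Fin m → ℝ) → ℝ := fun y => c * Real.exp (-(1/2) * (y ⬝ᵥ (Pmat⁻¹ *ᵥ y))) * (1 - f y)
    with hGdef
  have hppos : (0:ℝ) < (2 * Real.pi) ^ m * Pmat.det :=
    mul_pos (by positivity) hP.det_pos
  have hcpos : 0 < c := Real.rpow_pos_of_pos hppos _
  have hpt : ∀ y : Fin m → ℝ,
      ((fun y => ENNReal.ofReal (c * Real.exp (-(1/2) * (y ⬝ᵥ (Pmat⁻¹ *ᵥ y)))))
        * fun y => ENNReal.ofReal (1 - f y)) y = ENNReal.ofReal (G y) := by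
    intro y
    simp only [Pi.mul_apply, hGdef]
    rw [← ENNReal.ofReal_mul (by positivity)]
  simp_rw [hpt]
  -- integrability and value via gauss
  have hPinv : (Pmat⁻¹).PosDef := hP.inv
  have hsum : (Pmat⁻¹ + Y).PosDef := hPinv.add_posSemidef hY.posSemidef
  obtain ⟨hint1, hval1⟩ := gauss Pmat⁻¹ hPinv
  obtain ⟨hint2, hval2⟩ := gauss (Pmat⁻¹ + Y) hsum
  have hGeq : ∀ y, G y = c * Real.exp (-(1/2) * (y ⬝ᵥ (Pmat⁻¹ *ᵥ y)))
      - c * Real.exp (-(1/2) * (y ⬝ᵥ ((Pmat⁻¹ + Y) *ᵥ y))) := by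
    intro y
    have hexp : Real.exp (-(1/2) * (y ⬝ᵥ (Pmat⁻¹ *ᵥ y))) * f y
        = Real.exp (-(1/2) * (y ⬝ᵥ ((Pmat⁻¹ + Y) *ᵥ y))) := by
      rw [hfdef, ← Real.exp_add]
      congr 1
      rw [Matrix.add_mulVec, dotProduct_add]
      ring
    rw [hGdef]
    simp only
    rw [mul_sub, mul_one, mul_assoc, hexp]
  have hGint : Integrable G := by
    have := ((hint1.const_mul c).sub (hint2.const_mul c))
    exact this.congr (Filter.Eventually.of_forall fun y => (hGeq y).symm)
  have hGnn : 0 ≤ᵐ[volume] G := Filter.Eventually.of_forall fun y => by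
    have := hfle y
    have := (Real.exp_pos (-(1/2) * (y ⬝ᵥ (Pmat⁻¹ *ᵥ y)))).le
    rw [hGdef]
    simp only
    have h1 : (0:ℝ) ≤ 1 - f y := by linarith [hfle y]
    positivity
  rw [← MeasureTheory.ofReal_integral_eq_lintegral_ofReal hGint hGnn]
  congr 1
  -- now the real computation
  have hint : ∫ y, G y = c * (Real.sqrt ((2 * Real.pi) ^ m) / Real.sqrt (Pmat⁻¹).det)
      - c * (Real.sqrt ((2 * Real.pi) ^ m) / Real.sqrt (Pmat⁻¹ + Y).det) := by
    simp_rw [hGeq]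
    rw [integral_sub (hint1.const_mul c) (hint2.const_mul c),
      integral_const_mul, integral_const_mul, hval1, hval2]
  rw [hint]
  -- abbreviations
  set a := Real.sqrt ((2 * Real.pi) ^ m) with hadef
  have hapos : 0 < a := Real.sqrt_pos.mpr (by positivity)
  set p := Real.sqrt Pmat.det with hpdef
  have hppos' : 0 < p := Real.sqrt_pos.mpr hP.det_pos
  set q := Real.sqrt (Pmat⁻¹ + Y).det with hqdef
  have hqpos : 0 < q := Real.sqrt_pos.mpr hsum.det_pos
  have hc : c = (a * p)⁻¹ := by
    rw [hcdef, rpow_neg_half_eq _ hppos.le, Real.sqrt_mul (by positivity)]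
  have hdetinv : (Pmat⁻¹).det = (Pmat.det)⁻¹ := by
    rw [Matrix.det_nonsing_inv, Ring.inverse_eq_inv']
  have hdetmul : (1 + Pmat * Y).det = Pmat.det * (Pmat⁻¹ + Y).det := by
    rw [← Matrix.det_mul, Matrix.mul_add,
      Matrix.mul_nonsing_inv _ (isUnit_iff_ne_zero.mpr hP.det_pos.ne')]
  have hrhs : ((1 + Pmat * Y).det) ^ (-(1 : ℝ)/2) = (p * q)⁻¹ := by
    rw [hdetmul, rpow_neg_half_eq _ (mul_pos hP.det_pos hsum.det_pos).le,
      Real.sqrt_mul hP.det_pos.le, hpdef, hqdef]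
  rw [hrhs, hdetinv, Real.sqrt_inv, hc, hpdef]
  field_simp [(Real.sqrt_pos.mpr hP.det_pos).ne']
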